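/- arXiv:0811.3620 — 4 statements merged into one kernel-verified Lean document; each statement's English description precedes it below -/
import Mathlib

section
/- For the repository R_n with packages a_1,...,a_n and b_1,...,b_n, where each a_i depends on the single disjunctive dependency {b_1,...,b_{i-1},b_{i+1},...,b_n}, each b_i has no dependencies, and any two distinct b_i, b_j conflict, the full set {a_1,...,a_n} is not co-installable whenever n ≥ 2. -/
def Healthy {α : Type*} (D : α → Set (Set α)) (C : Set (α × α)) (I : Set α) : Prop :=
  (∀ π ∈ I, ∀ d ∈ D π, (I ∩ d).Nonempty) ∧ ∀ p ∈ I, ∀ q ∈ I, (p, q) ∉ C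

def Coinstallable {α : Type*} (D : α → Set (Set α)) (C : Set (α × α)) (s : Set α) : Prop :=
  ∃ I, Healthy D C I ∧ s ⊆ I

def Installable {α : Type*} (D : α → Set (Set α)) (C : Set (α × α)) (π : α) : Prop :=
  Coinstallable D C {π}


def Dn (n : ℕ) : Fin n ⊕ Fin n → Set (Set (Fin n ⊕ Fin n))
  | Sum.inl i => {{p | ∃ j : Fin n, j ≠ i ∧ p = Sum.inr j}}
  | Sum.inr _ => ∅

def Cn (n : ℕ) : Set ((Fin n ⊕ Fin n) × (Fin n ⊕ Fin n)) :=
  {q | ∃ i j : Fin n, i ≠ j ∧ q = (Sum.inr i, Sum.inr j)}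

theorem stmt0 (n : ℕ) (hn : 2 ≤ n) :
    ¬ Coinstallable (Dn n) (Cn n) {p | ∃ i : Fin n, p = Sum.inl i} := by
  rintro ⟨I, ⟨hab, hpc⟩, hsub⟩
  have h0 : 0 < n := by omega
  -- helper: for any i, there is j ≠ i with b_j ∈ I
  have key : ∀ i : Fin n, ∃ j : Fin n, j ≠ i ∧ Sum.inr j ∈ I := by
    intro i
    have hai : Sum.inl i ∈ I := hsub ⟨i, rfl⟩
    obtain ⟨p, hpI, hpd⟩ := hab (Sum.inl i) hai
      {p | ∃ j : Fin n, j ≠ i ∧ p = Sum.inr j} rfl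
    obtain ⟨j, hji, rfl⟩ := hpd
    exact ⟨j, hji, hpI⟩
  obtain ⟨j, _, hj⟩ := key ⟨0, h0⟩
  obtain ⟨k, hkj, hk⟩ := key j
  exact hpc _ hk _ hj ⟨k, j, hkj, rfl⟩
end

section
/- For the repository R_n as above, every proper subset of {a_1,...,a_n} is co-installable. Hence for every n there exists a repository containing a set of n packages that is not co-installable but all of whose proper subsets are co-installable; in particular, minimal non-co-installable sets can be arbitrarily large. -/
theorem stmt1 (n : ℕ) :
    (∀ s : Set (Fin n ⊕ Fin n), s ⊂ {p | ∃ i : Fin n, p = Sum.inl i} →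
      Coinstallable (Dn n) (Cn n) s) ∧
    (2 ≤ n → ¬ Coinstallable (Dn n) (Cn n) {p | ∃ i : Fin n, p = Sum.inl i}) := by
  constructor
  · intro s hs
    obtain ⟨x, hx, hxs⟩ := Set.exists_of_ssubset hs
    obtain ⟨k, rfl⟩ := hx
    refine ⟨s ∪ {Sum.inr k}, ⟨?_, ?_⟩, Set.subset_union_left⟩
    · intro π hπ d hd
      rcases hπ with hπ | hπ
      · obtain ⟨i, rfl⟩ := hs.1 hπ
        simp only [Dn, Set.mem_singleton_iff] at hd
        subst hd
        refine ⟨Sum.inr k, Or.inr rfl, k, ?_, rfl⟩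
        intro hki; subst hki; exact hxs hπ
      · simp only [Set.mem_singleton_iff] at hπ
        subst hπ
        simp [Dn] at hd
    · rintro p hp q hq ⟨i, j, hij, heq⟩
      have hpi : p = Sum.inr i := congrArg Prod.fst heq
      have hqj : q = Sum.inr j := congrArg Prod.snd heq
      have hik : i = k := by
        rcases hp with hp | hp
        · obtain ⟨m, hm⟩ := hs.1 hp; rw [hpi] at hm; exact absurd hm (by simp)
        · rw [hpi] at hp; simpa using hp
      have hjk : j = k := by
        rcases hq with hq | hq
        · obtain ⟨m, hm⟩ := hs.1 hq; rw [hqj] at hm; exact absurd hm (by simp)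
        · rw [hqj] at hq; simpa using hq
      exact hij (hik.trans hjk.symm)
  · rintro hn ⟨I, ⟨hdep, hconf⟩, hsub⟩
    have hpos : 0 < n := by omega
    have h0 : Sum.inl (⟨0, hpos⟩ : Fin n) ∈ I := hsub ⟨⟨0, hpos⟩, rfl⟩
    obtain ⟨x, hxI, hxd⟩ := hdep _ h0 _ rfl
    obtain ⟨j, hj0, rfl⟩ := hxd
    have hj : Sum.inl j ∈ I := hsub ⟨j, rfl⟩
    obtain ⟨y, hyI, hyd⟩ := hdep _ hj _ rfl
    obtain ⟨k, hkj, rfl⟩ := hyd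
    exact hconf _ hxI _ hyI ⟨j, k, fun h => hkj h.symm, rfl⟩
end

section
/- In the repository R_n, every individual package is installable: for each a_i there is a healthy installation containing a_i (namely {a_i} ∪ {b_j} for any fixed j ≠ i), and each b_i is installable via {b_i}. Thus installability of every member of a set does not imply co-installability of the set. -/
lemma healthy_pair (n : ℕ) (i j : Fin n) (hij : j ≠ i) :
    Healthy (Dn n) (Cn n) {Sum.inl i, Sum.inr j} := by
  constructor
  · rintro π (rfl | rfl) d hd
    · simp only [Dn, Set.mem_singleton_iff] at hd
      subst hd
      exact ⟨Sum.inr j, Or.inr rfl, j, hij, rfl⟩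
    · simp [Dn] at hd
  · rintro p hp q hq ⟨a, b, hab, heq⟩
    obtain ⟨h1, h2⟩ := Prod.mk.injEq .. ▸ heq
    rcases hp with rfl | rfl <;> rcases hq with rfl | rfl <;>
      simp_all

lemma healthy_single (n : ℕ) (i : Fin n) :
    Healthy (Dn n) (Cn n) {Sum.inr i} := by
  constructor
  · rintro π rfl d hd; simp [Dn] at hd
  · rintro p rfl q rfl ⟨a, b, hab, heq⟩
    simp only [Prod.mk.injEq, Sum.inr.injEq] at heq
    exact hab (heq.1.symm.trans heq.2)

theorem stmt2 (n : ℕ) (hn : 2 ≤ n) :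
    (∀ i j : Fin n, j ≠ i →
      Healthy (Dn n) (Cn n) {Sum.inl i, Sum.inr j} ∧
      Installable (Dn n) (Cn n) (Sum.inl i)) ∧
    (∀ i : Fin n,
      Healthy (Dn n) (Cn n) {Sum.inr i} ∧ Installable (Dn n) (Cn n) (Sum.inr i)) ∧
    ¬ Coinstallable (Dn n) (Cn n) {p | ∃ i : Fin n, p = Sum.inl i} := by
  refine ⟨fun i j hij => ⟨healthy_pair n i j hij, ?_⟩,
    fun i => ⟨healthy_single n i, ⟨{Sum.inr i}, healthy_single n i, by simp⟩⟩, ?_⟩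
  · exact ⟨{Sum.inl i, Sum.inr j}, healthy_pair n i j hij, by simp⟩
  · rintro ⟨I, ⟨hab, hpe⟩, hsub⟩
    haveI : Nontrivial (Fin n) := Fin.nontrivial_iff_two_le.mpr hn
    -- abundance for inl 0 gives some inr j ∈ I
    have h0 : Sum.inl (⟨0, by omega⟩ : Fin n) ∈ I := hsub ⟨_, rfl⟩
    obtain ⟨p, hpI, j, hj0, rfl⟩ := hab _ h0 _ rfl
    have hj : Sum.inl j ∈ I := hsub ⟨j, rfl⟩
    obtain ⟨q, hqI, k, hkj, rfl⟩ := hab _ hj _ rfl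
    exact hpe _ hqI _ hpI ⟨k, j, hkj, rfl⟩
end

section
/- A package π is installable in repository R if and only if the Boolean formula φ_R ∧ x_π is satisfiable, where φ_R is the conjunction, over all packages p and dependencies d ∈ D(p), of the implication x_p → ⋁_{q ∈ d} x_q, together with, for each conflict (p, q) ∈ C, the clause ¬(x_p ∧ x_q). (Here P is finite, and a satisfying assignment corresponds to the installation of packages whose variables are true.) -/
def Sat {α : Type*} (D : α → Set (Set α)) (C : Set (α × α)) (σ : α → Bool) : Prop :=
  (∀ p, σ p = true → ∀ d ∈ D p, ∃ q ∈ d, σ q = true) ∧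
  ∀ p q, (p, q) ∈ C → ¬(σ p = true ∧ σ q = true)

theorem stmt7 {α : Type*} [Fintype α] (D : α → Set (Set α)) (C : Set (α × α))
    (hSym : ∀ p q, (p, q) ∈ C → (q, p) ∈ C) (π : α) :
    Installable D C π ↔ ∃ σ : α → Bool, Sat D C σ ∧ σ π = true := by 
  classical
  constructor
  · rintro ⟨I, ⟨hA, hP⟩, hπ⟩
    refine ⟨fun p => decide (p ∈ I), ⟨?_, ?_⟩, by simp [hπ rfl]⟩
    · intro p hp d hd
      obtain ⟨q, hqI, hqd⟩ := hA p (by simpa using hp) d hd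
      exact ⟨q, hqd, by simp [hqI]⟩
    · intro p q hc ⟨hp, hq⟩
      exact hP p (by simpa using hp) q (by simpa using hq) hc
  · rintro ⟨σ, ⟨hA, hP⟩, hπ⟩
    refine ⟨{p | σ p = true}, ⟨?_, ?_⟩, by intro x hx; simp_all⟩
    · intro p hp d hd
      obtain ⟨q, hqd, hq⟩ := hA p hp d hd
      exact ⟨q, hq, hqd⟩
    · intro p hp q hq hc
      exact hP p q hc ⟨hp, hq⟩
end
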